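/- Let H1, H2, H3 be real Hilbert spaces and let A : H1 → H3, B : H2 → H3 be continuous linear maps. If there exists a linear map C₁ : H1 → H2 (not necessarily continuous) with A = B ∘ C₁, then there exists a continuous linear map C₂ : H1 → H2 with A = B ∘ C₂. -/

import Mathlib

/-- If `A = B ∘ C₁` for a (not necessarily continuous) linear map `C₁`, then
`A = B ∘ C₂` for some continuous linear map `C₂`. -/
theorem factorization_upgrade_to_continuous
    {H1 H2 H3 : Type*}
    [NormedAddCommGroup H1] [InnerProductSpace ℝ H1] [CompleteSpace H1]
    [NormedAddCommGroup H2] [InnerProductSpace ℝ H2] [CompleteSpace H2]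
    [NormedAddCommGroup H3] [InnerProductSpace ℝ H3] [CompleteSpace H3]
    (A : H1 →L[ℝ] H3) (B : H2 →L[ℝ] H3)
    (C₁ : H1 →ₗ[ℝ] H2) (hC₁ : ∀ h1 : H1, A h1 = B (C₁ h1)) :
    ∃ C₂ : H1 →L[ℝ] H2, ∀ h1 : H1, A h1 = B (C₂ h1) := by
  set K : Submodule ℝ H2 := LinearMap.ker (B : H2 →ₗ[ℝ] H3) with hK
  have hKclosed : IsClosed (K : Set H2) := ContinuousLinearMap.isClosed_ker B
  haveI : CompleteSpace K := hKclosed.completeSpace_coe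
  set g : H1 →ₗ[ℝ] H2 :=
    Kᗮ.subtype ∘ₗ (Kᗮ.orthogonalProjectionOnto).toLinearMap ∘ₗ C₁ with hg
  have hmemKo : ∀ x, g x ∈ Kᗮ := fun x => (Kᗮ.orthogonalProjectionOnto (C₁ x)).2
  have hBg : ∀ x, B (g x) = B (C₁ x) := by
    intro x
    have h1 : C₁ x - g x ∈ K := by
      have := Submodule.sub_starProjection_mem_orthogonal (K := Kᗮ) (C₁ x)
      rwa [K.orthogonal_orthogonal] at this
    have : B (C₁ x - g x) = 0 := h1
    rw [map_sub, sub_eq_zero] at this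
    exact this.symm
  have hAg : ∀ x, A x = B (g x) := fun x => (hC₁ x).trans (hBg x).symm
  have hseq : ∀ (u : ℕ → H1) (x y), Filter.Tendsto u Filter.atTop (nhds x) →
      Filter.Tendsto (g ∘ u) Filter.atTop (nhds y) → y = g x := by
    intro u x y hu hgu
    have hyKo : y ∈ Kᗮ :=
      K.isClosed_orthogonal.mem_of_tendsto hgu (Filter.Eventually.of_forall fun n => hmemKo (u n))
    have hBy : B y = A x := by
      have h1 : Filter.Tendsto (fun n => B (g (u n))) Filter.atTop (nhds (B y)) :=
        (B.continuous.tendsto y).comp hgu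
      have h2 : Filter.Tendsto (fun n => A (u n)) Filter.atTop (nhds (A x)) :=
        (A.continuous.tendsto x).comp hu
      have : (fun n => B (g (u n))) = fun n => A (u n) := by
        funext n; exact (hAg (u n)).symm
      rw [this] at h1
      exact tendsto_nhds_unique h1 h2
    have hdiffK : y - g x ∈ K := by
      show B (y - g x) = 0
      rw [map_sub, hBy, ← hAg x, sub_self]
    have hdiffKo : y - g x ∈ Kᗮ := Kᗮ.sub_mem hyKo (hmemKo x)
    have : y - g x ∈ K ⊓ Kᗮ := ⟨hdiffK, hdiffKo⟩
    rw [K.inf_orthogonal_eq_bot, Submodule.mem_bot, sub_eq_zero] at this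
    exact this
  exact ⟨ContinuousLinearMap.ofSeqClosedGraph hseq, fun x => hAg x⟩
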